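/- Let γ = (γ_u) be nonnegative weights indexed by the nonempty finite subsets of ℕ such that Ĉ_γ := sup over nonempty finite u ⊂ ℕ of γ_u · √(4.9 + 2 log(e·max(u)/|u|)) · √|u| is finite, where max(u) is the largest element of u. Then γ_u ≤ Ĉ_γ · |u|^{−1/2} for all u, and for every constant c with c·Ĉ_γ^{−2} ≥ 2 one has ∑ over all nonempty finite subsets u of ℕ of e^{−c γ_u^{−2}} < ∞ (terms with γ_u = 0 interpreted as 0). -/

import Mathlib

open Finset Nat

lemma two_le_e : (2:ℝ) ≤ Real.exp 1 := by
  have := Real.add_one_le_exp (1:ℝ); linarith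

lemma four_le_e49 : (4:ℝ) ≤ Real.exp 4.9 := by
  have h := Real.add_one_le_exp (4.9:ℝ)
  have : (4:ℝ) ≤ 4.9 + 1 := by norm_num
  linarith

lemma core_pow_bound (n : ℕ) (M K : ℝ) (hM : 1 ≤ M) (hK0 : 0 ≤ K) (hKM : K ≤ M + 1)
    (hK2 : K ≤ 2 ^ (n + 1)) :
    K ^ (3*n+4) * (M+1)^2 * 2^n ≤
      4 * Real.exp 4.9 ^ (2*n+2) * Real.exp 1 ^ (3*n+3) * M ^ (3*n+4) := by
  have hM0 : (0:ℝ) ≤ M := by linarith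
  have h2M : M + 1 ≤ 2 * M := by linarith
  calc K ^ (3*n+4) * (M+1)^2 * 2^n
      = K ^ (3*n+2) * K^2 * (M+1)^2 * 2^n := by rw [← pow_add]
    _ ≤ (2*M) ^ (3*n+2) * ((2:ℝ)^(n+1))^2 * (2*M)^2 * 2^n := by
        gcongr
        · linarith
    _ = 2^(6*n+6) * M^(3*n+4) := by ring
    _ ≤ 2^(7*n+9) * M^(3*n+4) := by
        have h : (2:ℝ)^(6*n+6) ≤ 2^(7*n+9) :=
          pow_le_pow_right₀ (by norm_num) (by omega)
        exact mul_le_mul_of_nonneg_right h (by positivity)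
    _ = 4 * ((2:ℝ)^2)^(2*n+2) * 2^(3*n+3) * M^(3*n+4) := by
        rw [← pow_mul]; ring
    _ ≤ 4 * Real.exp 4.9 ^ (2*n+2) * Real.exp 1 ^ (3*n+3) * M ^ (3*n+4) := by
        have e1 : (2:ℝ)^2 ≤ Real.exp 4.9 := by nlinarith [four_le_e49]
        have e2 : (2:ℝ) ≤ Real.exp 1 := two_le_e
        gcongr <;> norm_num

lemma choose_le_bound (m j : ℕ) :
    (m.choose j : ℝ) ≤ (m:ℝ)^j * Real.exp 1 ^ (j+1) / ((j:ℝ)+1)^j := by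
  have hK : (0:ℝ) < (j:ℝ)+1 := by positivity
  have hfac : (0:ℝ) < (j ! : ℝ) := by exact_mod_cast j.factorial_pos
  have h1 : ((j:ℝ)+1)^(j+1) / ((j+1)! : ℝ) ≤ Real.exp ((j:ℝ)+1) :=
    Real.pow_div_factorial_le_exp _ (by positivity) (j+1)
  have hexp : Real.exp ((j:ℝ)+1) = Real.exp 1 ^ (j+1) := by
    rw [← Real.exp_nat_mul]
    congr 1
    push_cast
    ring
  have key : ((j:ℝ)+1)^j ≤ (j ! : ℝ) * Real.exp 1 ^ (j+1) := by
    have h2 : ((j:ℝ)+1)^(j+1) ≤ ((j+1)! : ℝ) * Real.exp 1 ^ (j+1) := by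
      rw [← hexp]
      rw [div_le_iff₀ (by exact_mod_cast (j+1).factorial_pos)] at h1
      linarith
    have h3 : ((j+1)! : ℝ) = ((j:ℝ)+1) * (j ! : ℝ) := by
      rw [Nat.factorial_succ]; push_cast; ring
    rw [pow_succ, h3] at h2
    nlinarith [pow_nonneg (le_of_lt hK) j]
  calc (m.choose j : ℝ) ≤ (m:ℝ)^j / (j ! : ℝ) := Nat.choose_le_pow_div j m
    _ ≤ (m:ℝ)^j * Real.exp 1 ^ (j+1) / ((j:ℝ)+1)^j := by
        rw [div_le_div_iff₀ hfac (by positivity)]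
        calc (m:ℝ)^j * ((j:ℝ)+1)^j ≤ (m:ℝ)^j * ((j ! : ℝ) * Real.exp 1 ^ (j+1)) := by
              gcongr
          _ = (m:ℝ)^j * Real.exp 1 ^ (j+1) * (j ! : ℝ) := by ring





lemma per_term (m j : ℕ) (hj : j ≤ m) :
    (m.choose j : ℝ) *
      Real.exp (-(2 * ((j:ℝ)+1)) * (4.9 + 2 * Real.log (Real.exp 1 * (m:ℝ) / ((j:ℝ)+1)))) ≤
    4 * (1/2)^j / ((m:ℝ)+1)^2 := by
  rcases Nat.eq_zero_or_pos m with rfl | hm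
  · -- m = 0 forces j = 0
    interval_cases j
    have h2 : Real.exp (-(2 * (((0:ℕ):ℝ)+1)) * (4.9 + 2 * Real.log (Real.exp 1 * ((0:ℕ):ℝ) / (((0:ℕ):ℝ)+1)))) ≤ 1 := by
      rw [Real.exp_le_one_iff]
      rw [show Real.exp 1 * ((0:ℕ):ℝ) / (((0:ℕ):ℝ)+1) = 0 by norm_num, Real.log_zero]
      norm_num
    rw [show ((Nat.choose 0 0 : ℕ):ℝ) = 1 by norm_num, one_mul]
    refine h2.trans (by norm_num)
  · have hM : (1:ℝ) ≤ (m:ℝ) := by exact_mod_cast hm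
    set E := Real.exp 1 with hE
    have hEpos : 0 < E := Real.exp_pos 1
    set M : ℝ := (m:ℝ) with hMdef
    set K : ℝ := (j:ℝ)+1 with hKdef
    have hK0 : (0:ℝ) < K := by positivity
    have hX : 0 < E * M / K := by positivity
    -- rewrite the exponential
    have hsplit : Real.exp (-(2 * K) * (4.9 + 2 * Real.log (E * M / K)))
        = (Real.exp (-4.9) * (K / (E * M))^2) ^ (2*(j+1)) := by
      have h2 : Real.exp (-4.9) * (K/(E*M))^2 = Real.exp (-(4.9 + 2*Real.log (E*M/K))) := by
        rw [neg_add, Real.exp_add]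
        congr 1
        have h3 : -(2*Real.log (E*M/K)) = ((2:ℕ):ℝ) * Real.log ((E*M/K)⁻¹) := by
          rw [Real.log_inv]; push_cast; ring
        rw [h3, Real.exp_nat_mul, Real.exp_log (inv_pos.2 hX), inv_div]
      rw [h2, ← Real.exp_nat_mul]
      congr 1
      push_cast
      ring
    rw [hsplit]
    have hpow0 : (0:ℝ) ≤ (Real.exp (-4.9) * (K / (E * M))^2) ^ (2*(j+1)) := by positivity
    have step1 : (m.choose j : ℝ) * (Real.exp (-4.9) * (K / (E * M))^2) ^ (2*(j+1))
        ≤ (M^j * E^(j+1) / K^j) * (Real.exp (-4.9) * (K / (E * M))^2) ^ (2*(j+1)) :=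
      mul_le_mul_of_nonneg_right (choose_le_bound m j) hpow0
    refine step1.trans ?_
    -- algebraic reduction
    have hexpand : (M^j * E^(j+1) / K^j) * (Real.exp (-4.9) * (K / (E * M))^2) ^ (2*(j+1))
        = (K^(3*j+4) * Real.exp (-4.9) ^ (2*j+2)) / (E^(3*j+3) * M^(3*j+4)) := by
      rw [mul_pow, ← pow_mul, div_pow, mul_pow,
        show 2*(2*(j+1)) = 4*j+4 from by ring, show 2*(j+1) = 2*j+2 from by ring]
      have hKne : K ≠ 0 := ne_of_gt hK0
      have hEne : E ≠ 0 := ne_of_gt hEpos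
      have hMne : M ≠ 0 := by positivity
      field_simp
      ring
    rw [hexpand]
    rw [div_le_div_iff₀ (by positivity) (by positivity)]
    have hKM : K ≤ M + 1 := by
      rw [hKdef, hMdef]
      have : (j:ℝ) ≤ (m:ℝ) := by exact_mod_cast hj
      linarith
    have hK2 : K ≤ 2^(j+1) := by
      have h1 : (j:ℕ) + 1 ≤ 2^(j+1) := by
        have := Nat.lt_two_pow_self (n := j)
        have h2 : (2:ℕ)^j ≤ 2^(j+1) := Nat.pow_le_pow_right (by norm_num) (by omega)
        omega
      calc K = ((j+1 : ℕ) : ℝ) := by push_cast; ring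
        _ ≤ ((2^(j+1) : ℕ) : ℝ) := by exact_mod_cast h1
        _ = 2^(j+1) := by push_cast; ring
    have hcore := core_pow_bound j M K hM hK0.le hKM hK2
    calc K^(3*j+4) * Real.exp (-4.9) ^ (2*j+2) * (M+1)^2
        = (K^(3*j+4) * (M+1)^2) / Real.exp 4.9 ^ (2*j+2) := by
          rw [Real.exp_neg, inv_pow]
          ring
      _ ≤ (4 * Real.exp 4.9 ^ (2*j+2) * E^(3*j+3) * M^(3*j+4) / 2^j) / Real.exp 4.9 ^ (2*j+2) := by
          gcongr
          rw [le_div_iff₀ (by positivity : (0:ℝ) < 2^j)]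
          exact hcore
      _ = 4 * (1/2)^j * (E^(3*j+3) * M^(3*j+4)) := by
          rw [div_pow, one_pow]
          field_simp

noncomputable def Gw (u : Finset ℕ) : ℝ :=
  Real.exp (-(2 * (u.card : ℝ)) *
    (4.9 + 2 * Real.log (Real.exp 1 * ((u.sup id : ℕ) : ℝ) / (u.card : ℝ))))



lemma insert_sum_bound (m : ℕ) :
    ∑ v ∈ (range m).powerset, Gw (insert m v) ≤ 8 / ((m:ℝ)+1)^2 := by
  have hstep : ∀ v ∈ (range m).powerset, Gw (insert m v) =
      (fun i : ℕ => Real.exp (-(2*((i:ℝ)+1)) *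
        (4.9 + 2*Real.log (Real.exp 1 * (m:ℝ)/((i:ℝ)+1))))) v.card := by
    intro v hv
    rw [mem_powerset] at hv
    have hm : m ∉ v := fun h => absurd (hv h) (by simp)
    have hcard : (insert m v).card = v.card + 1 := card_insert_of_notMem hm
    have hsup : (insert m v).sup id = m := by
      rw [sup_insert]
      exact sup_eq_left.2 (Finset.sup_le fun x hx => le_of_lt (mem_range.1 (hv hx)))
    simp only [Gw, hcard, hsup]
    push_cast
    ring_nf
  have happ := Finset.sum_powerset_apply_card
    (f := fun i : ℕ => Real.exp (-(2*((i:ℝ)+1)) *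
      (4.9 + 2*Real.log (Real.exp 1 * (m:ℝ)/((i:ℝ)+1))))) (x := range m)
  rw [Finset.sum_congr rfl hstep, happ, card_range]
  calc ∑ i ∈ range (m+1), m.choose i •
        Real.exp (-(2*((i:ℝ)+1)) * (4.9 + 2*Real.log (Real.exp 1 * (m:ℝ)/((i:ℝ)+1))))
      ≤ ∑ i ∈ range (m+1), 4*(1/2)^i/((m:ℝ)+1)^2 := by
        refine sum_le_sum fun i hi => ?_
        rw [nsmul_eq_mul]
        exact per_term m i (Nat.lt_succ_iff.1 (mem_range.1 hi))
    _ = 4/((m:ℝ)+1)^2 * ∑ i ∈ range (m+1), (1/2:ℝ)^i := by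
        rw [Finset.mul_sum]
        exact sum_congr rfl fun i _ => by ring
    _ ≤ 4/((m:ℝ)+1)^2 * 2 := by
        gcongr
        exact sum_geometric_two_le _
    _ = 8/((m:ℝ)+1)^2 := by ring

lemma powerset_sum_bound (N : ℕ) :
    ∑ u ∈ (range N).powerset, Gw u ≤ 1 + ∑ m ∈ range N, 8/((m:ℝ)+1)^2 := by
  induction N with
  | zero =>
    simp [Gw]
  | succ N ih =>
    have hdisj : Disjoint (range N).powerset ((range N).powerset.image (insert N)) := by
      rw [Finset.disjoint_left]
      intro t ht htimg
      obtain ⟨v, hv, rfl⟩ := mem_image.1 htimg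
      have : N ∈ range N := (mem_powerset.1 ht) (Finset.mem_insert_self N v)
      simp at this
    have hinj : ∀ v ∈ (range N).powerset, ∀ w ∈ (range N).powerset,
        insert N v = insert N w → v = w := by
      intro v hv w hw h
      have hNv : N ∉ v := fun hc => by simpa using (mem_powerset.1 hv) hc
      have hNw : N ∉ w := fun hc => by simpa using (mem_powerset.1 hw) hc
      rw [← erase_insert hNv, h, erase_insert hNw]
    rw [sum_range_succ, range_add_one, powerset_insert, sum_union hdisj, sum_image hinj]
    have h1 := insert_sum_bound N
    linarith

lemma inv_sq_sum_bound (N : ℕ) : ∑ m ∈ range N, (8:ℝ)/((m:ℝ)+1)^2 ≤ 16 := by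
  have key : ∀ m : ℕ, (8:ℝ)/((m:ℝ)+1)^2 ≤
      (fun i : ℕ => (16:ℝ)/((i:ℝ)+1)) m - (fun i : ℕ => (16:ℝ)/((i:ℝ)+1)) (m+1) := by
    intro m
    show (8:ℝ)/((m:ℝ)+1)^2 ≤ 16/((m:ℝ)+1) - 16/(((m+1:ℕ):ℝ)+1)
    have h1 : (0:ℝ) < (m:ℝ)+1 := by positivity
    have h2 : (0:ℝ) < ((m+1:ℕ):ℝ)+1 := by positivity
    rw [div_sub_div _ _ (ne_of_gt h1) (ne_of_gt h2),
      div_le_div_iff₀ (by positivity) (by positivity)]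
    push_cast
    nlinarith [sq_nonneg ((m:ℝ)+1)]
  calc ∑ m ∈ range N, (8:ℝ)/((m:ℝ)+1)^2
      ≤ ∑ m ∈ range N, ((fun i : ℕ => (16:ℝ)/((i:ℝ)+1)) m
          - (fun i : ℕ => (16:ℝ)/((i:ℝ)+1)) (m+1)) := sum_le_sum fun m _ => key m
    _ = (fun i : ℕ => (16:ℝ)/((i:ℝ)+1)) 0 - (fun i : ℕ => (16:ℝ)/((i:ℝ)+1)) N :=
        Finset.sum_range_sub' _ N
    _ ≤ 16 := by
        show (16:ℝ)/(((0:ℕ):ℝ)+1) - 16/((N:ℝ)+1) ≤ 16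
        have : (0:ℝ) ≤ 16/((N:ℝ)+1) := by positivity
        norm_num
        linarith

lemma summable_Gw : Summable fun u : {u : Finset ℕ // u.Nonempty} => Gw u.1 := by
  apply summable_of_sum_le (c := 17)
  · intro x
    exact (Real.exp_pos _).le
  · intro s
    set N := (s.sup fun x => x.1.sup id) + 1 with hN
    have hsub : ∀ x ∈ s, x.1 ⊆ range N := by
      intro x hx a ha
      rw [mem_range, hN]
      exact Nat.lt_succ_of_le (le_trans (Finset.le_sup (f := id) ha)
        (Finset.le_sup (f := fun x : {u : Finset ℕ // u.Nonempty} => x.1.sup id) hx))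
    calc ∑ x ∈ s, Gw x.1 = ∑ u ∈ s.image (fun x => x.1), Gw u := by
          rw [sum_image]
          intro x hx y hy h
          exact Subtype.ext h
      _ ≤ ∑ u ∈ (range N).powerset, Gw u := by
          refine sum_le_sum_of_subset_of_nonneg ?_ fun u _ _ => (Real.exp_pos _).le
          intro u hu
          obtain ⟨x, hx, rfl⟩ := mem_image.1 hu
          exact mem_powerset.2 (hsub x hx)
      _ ≤ 1 + ∑ m ∈ range N, 8/((m:ℝ)+1)^2 := powerset_sum_bound N
      _ ≤ 1 + 16 := by linarith [inv_sq_sum_bound N]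
      _ ≤ 17 := by norm_num



lemma two_le_e' : (2:ℝ) ≤ Real.exp 1 := by
  have := Real.add_one_le_exp (1:ℝ); linarith

lemma card_le_max_succ (u : Finset ℕ) (hu : u.Nonempty) : u.card ≤ u.max' hu + 1 := by
  have hsub : u ⊆ Finset.Iic (u.max' hu) := fun x hx => Finset.mem_Iic.2 (Finset.le_max' u x hx)
  simpa [Nat.card_Iic] using Finset.card_le_card hsub

lemma log_term_nonneg (u : Finset ℕ) (hu : u.Nonempty) :
    0 ≤ Real.log (Real.exp 1 * ((u.max' hu : ℕ) : ℝ) / (u.card : ℝ)) := by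
  rcases Nat.eq_zero_or_pos (u.max' hu) with h0 | hpos
  · rw [h0]
    norm_num
  · apply Real.log_nonneg
    have hcard : (0:ℝ) < (u.card : ℝ) := by
      exact_mod_cast Finset.card_pos.2 hu
    rw [le_div_iff₀ hcard, one_mul]
    have hk : (u.card : ℝ) ≤ ((u.max' hu : ℕ) : ℝ) + 1 := by
      exact_mod_cast card_le_max_succ u hu
    have h1 : (1:ℝ) ≤ ((u.max' hu : ℕ) : ℝ) := by exact_mod_cast hpos
    nlinarith [two_le_e']

/-- if the nonnegative weights `(γ_u)`, indexed by the nonempty finite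
subsets of `ℕ`, satisfy `Ĉ_γ := sup_u γ_u √(4.9 + 2 log(e max(u)/|u|)) √|u| < ∞`, then
`γ_u ≤ Ĉ_γ |u|^{-1/2}` for all `u`, and for every `c` with `c Ĉ_γ^{-2} ≥ 2` the sum
`∑_u e^{-c γ_u^{-2}}` (terms with `γ_u = 0` interpreted as `0`) is finite. -/
theorem weights_bound_and_exp_summable (γ : Finset ℕ → ℝ)
    (hγ : ∀ u : Finset ℕ, 0 ≤ γ u) (C : ℝ)
    (hC : ∀ (u : Finset ℕ) (hu : u.Nonempty),
      γ u * Real.sqrt (4.9 + 2 * Real.log (Real.exp 1 * (u.max' hu) / u.card)) *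
        Real.sqrt u.card ≤ C) :
    (∀ u : Finset ℕ, u.Nonempty → γ u ≤ C / Real.sqrt u.card) ∧
    ∀ c : ℝ, 2 ≤ c * (C⁻¹) ^ 2 →
      Summable fun u : {u : Finset ℕ // u.Nonempty} =>
        if γ u.1 = 0 then 0 else Real.exp (-c * ((γ u.1)⁻¹) ^ 2) := by
  have part1 : ∀ u : Finset ℕ, u.Nonempty → γ u ≤ C / Real.sqrt u.card := by
    intro u hu
    have hcard : (0:ℝ) < Real.sqrt u.card := by
      apply Real.sqrt_pos.2
      exact_mod_cast Finset.card_pos.2 hu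
    have hsqrtL : (1:ℝ) ≤
        Real.sqrt (4.9 + 2 * Real.log (Real.exp 1 * (u.max' hu) / u.card)) := by
      rw [Real.one_le_sqrt]
      have := log_term_nonneg u hu
      linarith
    rw [le_div_iff₀ hcard]
    calc γ u * Real.sqrt u.card = γ u * 1 * Real.sqrt u.card := by ring
      _ ≤ γ u * Real.sqrt (4.9 + 2 * Real.log (Real.exp 1 * (u.max' hu) / u.card)) *
            Real.sqrt u.card := by
          gcongr
          exact hγ u
      _ ≤ C := hC u hu
  refine ⟨part1, fun c hc => ?_⟩
  have hC0 : 0 < C := by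
    rcases lt_trichotomy C 0 with h | h | h
    · exfalso
      have h1 := hC {0} (by simp)
      have h2 : 0 ≤ γ {0} * Real.sqrt (4.9 + 2 * Real.log (Real.exp 1 * (({0} : Finset ℕ).max'
          (by simp)) / ({0} : Finset ℕ).card)) * Real.sqrt (({0} : Finset ℕ).card) :=
        mul_nonneg (mul_nonneg (hγ _) (Real.sqrt_nonneg _)) (Real.sqrt_nonneg _)
      linarith
    · rw [h] at hc
      norm_num at hc
    · exact h
  have hcC : 2 * C^2 ≤ c := by
    have h2 : (C⁻¹)^2 = (C^2)⁻¹ := by rw [inv_pow]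
    rw [h2, ← div_eq_mul_inv, le_div_iff₀ (by positivity)] at hc
    linarith
  apply Summable.of_nonneg_of_le _ _ summable_Gw
  · intro x
    split_ifs
    · exact le_rfl
    · exact (Real.exp_pos _).le
  · rintro ⟨u, hu⟩
    dsimp only
    split_ifs with h
    · exact (Real.exp_pos _).le
    · unfold Gw
      rw [Real.exp_le_exp]
      have hsup_eq : u.sup id = u.max' hu := by
        rw [Finset.max'_eq_sup', Finset.sup'_eq_sup]
      rw [hsup_eq]
      set L : ℝ := 4.9 + 2 * Real.log (Real.exp 1 * (u.max' hu) / u.card) with hL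
      have hL1 : (1:ℝ) ≤ L := by
        have := log_term_nonneg u hu
        rw [hL]
        linarith
      have hγpos : 0 < γ u := (hγ u).lt_of_ne (Ne.symm h)
      have hk1 : (1:ℝ) ≤ (u.card : ℝ) := by
        exact_mod_cast Finset.card_pos.2 hu
    -- from hC : γ √L √k ≤ C
      have hstep := hC u hu
      have hprod : Real.sqrt L * Real.sqrt u.card * γ u ≤ C := by
        calc Real.sqrt L * Real.sqrt u.card * γ u
            = γ u * Real.sqrt L * Real.sqrt u.card := by ring
          _ ≤ C := by rw [hL]; exact hstep
      have hinv : Real.sqrt L * Real.sqrt u.card / C ≤ (γ u)⁻¹ := by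
        rw [inv_eq_one_div, div_le_div_iff₀ hC0 hγpos, one_mul]
        exact hprod
      have hsq : (Real.sqrt L * Real.sqrt u.card / C)^2 ≤ ((γ u)⁻¹)^2 :=
        pow_le_pow_left₀ (by positivity) hinv 2
      have hval : (Real.sqrt L * Real.sqrt u.card / C)^2 = L * u.card / C^2 := by
        rw [div_pow, mul_pow, Real.sq_sqrt (by linarith : (0:ℝ) ≤ L),
          Real.sq_sqrt (by positivity : (0:ℝ) ≤ (u.card:ℝ))]
      rw [hval] at hsq
      have h5 : 2 * (L * u.card) ≤ c * ((γ u)⁻¹)^2 := by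
        have e1 : 2*C^2 * (L * u.card / C^2) = 2*(L*u.card) := by
          field_simp
        calc 2*(L*u.card) = 2*C^2 * (L*u.card/C^2) := e1.symm
          _ ≤ c * (L*u.card/C^2) := by
              have hpos : 0 ≤ L * u.card / C^2 := by positivity
              exact mul_le_mul_of_nonneg_right hcC hpos
          _ ≤ c * ((γ u)⁻¹)^2 := by
              have hc0 : 0 ≤ c := by nlinarith
              exact mul_le_mul_of_nonneg_left hsq hc0
      rw [neg_mul, neg_mul, neg_le_neg_iff]
      calc 2 * (u.card : ℝ) * L = 2 * (L * u.card) := by ring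
        _ ≤ c * ((γ u)⁻¹)^2 := h5
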